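/- Let M and N be positive integers, let V be a unitary (M+1)×(M+1) complex matrix, and let v_0, v_1, …, v_M : Fin N → ℂ be unit vectors. Define Ψ : Fin (M+1) × Fin N → ℂ by Ψ(q,n) = Σ_{j=0}^{M} conj(V_{jq})·V_{j0}·v_j(n). Then Σ_{q,n} |Ψ(q,n)|² = 1, and Σ_{n} |Ψ(0,n)|² = ‖Σ_{j=0}^{M} |V_{j0}|²·v_j‖², where the norm is the Euclidean norm on Fin N → ℂ. (That is, the probability of measuring outcome 0 on the first register of the state (V†⊗I)·U·(V⊗I)|0⟩|0⟩, where U|j⟩|0⟩ = |j⟩|v_j⟩, equals ‖Σ_j |V_{j0}|² v_j‖².) -/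

import Mathlib

/-- For a unitary `V` and unit vectors `v_0, …, v_M`, the state
`Ψ(q,n) = Σ_j conj(V_{jq})·V_{j0}·v_j(n)` is normalized, and the probability of outcome `0`
on the first register equals `‖Σ_j |V_{j0}|²·v_j‖²`. -/
theorem stmt_7 (M N : ℕ) (hM : 0 < M) (hN : 0 < N)
    (V : Matrix (Fin (M + 1)) (Fin (M + 1)) ℂ)
    (hV : V ∈ Matrix.unitaryGroup (Fin (M + 1)) ℂ)
    (v : Fin (M + 1) → EuclideanSpace ℂ (Fin N)) (hv : ∀ j, ‖v j‖ = 1)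
    (Ψ : EuclideanSpace ℂ (Fin (M + 1) × Fin N))
    (hΨ : ∀ q n, Ψ (q, n) = ∑ j, starRingEnd ℂ (V j q) * V j 0 * v j n) :
    (∑ q, ∑ n, ‖Ψ (q, n)‖ ^ 2) = 1 ∧
    (∑ n, ‖Ψ (0, n)‖ ^ 2) =
      ‖∑ j, ((‖V j 0‖ ^ 2 : ℝ) : ℂ) • v j‖ ^ 2 := by
  have hVV : V * star V = 1 := (Matrix.mem_unitaryGroup_iff).mp hV
  have hVV' : star V * V = 1 := (Matrix.mem_unitaryGroup_iff').mp hV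
  -- row orthogonality
  have hrow : ∀ j k, (∑ q, starRingEnd ℂ (V j q) * V k q) =
      if k = j then 1 else 0 := by
    intro j k
    have := congrFun (congrFun hVV k) j
    rw [Matrix.mul_apply] at this
    simp only [Matrix.one_apply] at this
    rw [← this]
    apply Finset.sum_congr rfl
    intro q _
    simp [Matrix.star_apply, mul_comm]
  -- column 0 normalization
  have hcol : (∑ j, starRingEnd ℂ (V j 0) * V j 0) = 1 := by
    have := congrFun (congrFun hVV' 0) 0
    rw [Matrix.mul_apply] at this
    simp only [Matrix.one_apply, if_pos rfl, if_true] at this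
    rw [← this]
    apply Finset.sum_congr rfl
    intro q _
    simp [Matrix.star_apply]
  -- unit vectors
  have hvn : ∀ j, (∑ n, v j n * starRingEnd ℂ (v j n)) = 1 := by
    intro j
    have h1 : (∑ n, ‖v j n‖ ^ 2) = 1 := by
      have := hv j
      rw [EuclideanSpace.norm_eq] at this
      have h2 : (∑ n, ‖v j n‖ ^ 2) = 1 := by
        have := congrArg (· ^ 2) this
        simpa [Real.sq_sqrt (Finset.sum_nonneg fun i _ => sq_nonneg _)] using this
      simpa using h2
    calc (∑ n, v j n * starRingEnd ℂ (v j n))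
        = ∑ n, ((‖v j n‖ ^ 2 : ℝ) : ℂ) := by
          apply Finset.sum_congr rfl; intro n _
          rw [Complex.mul_conj, Complex.sq_norm]
      _ = 1 := by rw [← Complex.ofReal_sum, h1, Complex.ofReal_one]
  constructor
  · -- normalization
    have key : (∑ q, ∑ n, Ψ (q, n) * starRingEnd ℂ (Ψ (q, n))) = 1 := by
      have expand : ∀ q : Fin (M+1), (∑ n, Ψ (q, n) * starRingEnd ℂ (Ψ (q, n))) =
          ∑ j, ∑ k, (starRingEnd ℂ (V j q) * V k q) *
            ((V j 0 * starRingEnd ℂ (V k 0)) * ∑ n, v j n * starRingEnd ℂ (v k n)) := by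
        intro q
        calc (∑ n, Ψ (q, n) * starRingEnd ℂ (Ψ (q, n)))
            = ∑ n, ∑ j, ∑ k, (starRingEnd ℂ (V j q) * V k q) *
              ((V j 0 * starRingEnd ℂ (V k 0)) * (v j n * starRingEnd ℂ (v k n))) := by
              apply Finset.sum_congr rfl; intro n _
              rw [hΨ, map_sum, Finset.sum_mul]
              apply Finset.sum_congr rfl; intro j _
              rw [Finset.mul_sum]
              apply Finset.sum_congr rfl; intro k _
              simp only [map_mul, Complex.conj_conj]
              ring
          _ = ∑ j, ∑ k, (starRingEnd ℂ (V j q) * V k q) *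
              ((V j 0 * starRingEnd ℂ (V k 0)) * ∑ n, v j n * starRingEnd ℂ (v k n)) := by
              rw [Finset.sum_comm]
              apply Finset.sum_congr rfl; intro j _
              rw [Finset.sum_comm]
              apply Finset.sum_congr rfl; intro k _
              rw [Finset.mul_sum, Finset.mul_sum]
      calc (∑ q, ∑ n, Ψ (q, n) * starRingEnd ℂ (Ψ (q, n)))
          = ∑ q, ∑ j, ∑ k, (starRingEnd ℂ (V j q) * V k q) *
            ((V j 0 * starRingEnd ℂ (V k 0)) * ∑ n, v j n * starRingEnd ℂ (v k n)) := by
            exact Finset.sum_congr rfl fun q _ => expand q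
        _ = ∑ j, ∑ k, (∑ q, starRingEnd ℂ (V j q) * V k q) *
            ((V j 0 * starRingEnd ℂ (V k 0)) * ∑ n, v j n * starRingEnd ℂ (v k n)) := by
            rw [Finset.sum_comm]
            apply Finset.sum_congr rfl; intro j _
            rw [Finset.sum_comm]
            apply Finset.sum_congr rfl; intro k _
            rw [Finset.sum_mul]
        _ = ∑ j, (V j 0 * starRingEnd ℂ (V j 0)) * ∑ n, v j n * starRingEnd ℂ (v j n) := by
            apply Finset.sum_congr rfl; intro j _
            rw [Finset.sum_congr rfl fun k _ => by rw [hrow j k]]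
            simp
        _ = 1 := by
            rw [Finset.sum_congr rfl fun j _ => by rw [hvn j, mul_one, mul_comm]]
            exact hcol
    have : ((∑ q, ∑ n, ‖Ψ (q, n)‖ ^ 2 : ℝ) : ℂ) = 1 := by
      push_cast
      rw [← key]
      apply Finset.sum_congr rfl; intro q _
      apply Finset.sum_congr rfl; intro n _
      rw [Complex.mul_conj, Complex.normSq_eq_norm_sq]
      norm_cast
    exact_mod_cast this
  · -- probability of outcome 0
    have hΨ0 : ∀ n, Ψ (0, n) = (∑ j, ((‖V j 0‖ ^ 2 : ℝ) : ℂ) • v j) n := by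
      intro n
      rw [hΨ]
      rw [WithLp.ofLp_sum, Finset.sum_apply]
      apply Finset.sum_congr rfl; intro j _
      simp only [PiLp.smul_apply, smul_eq_mul]
      rw [mul_comm ((starRingEnd ℂ) (V j 0)) (V j 0), Complex.mul_conj,
        Complex.normSq_eq_norm_sq]
    have : (∑ n, ‖Ψ (0, n)‖ ^ 2) =
        ∑ n, ‖(∑ j, ((‖V j 0‖ ^ 2 : ℝ) : ℂ) • v j) n‖ ^ 2 := by
      apply Finset.sum_congr rfl; intro n _
      rw [hΨ0 n]
    rw [this, EuclideanSpace.norm_eq,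
      Real.sq_sqrt (Finset.sum_nonneg fun i _ => sq_nonneg _)]
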